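/- Increasing-knowledge-gain step-size theorem (p = 2): let A, B be nonzero m×N real matrices with trace(BᵀB)·‖A‖₂² > ‖B‖₂²·trace(AᵀA). Then there exists η₀ ≥ 0 such that for all η ≥ η₀, the matrix C = A − ηB satisfies G(C) ≥ G(A), where G(M) = trace(MᵀM)/(N‖M‖₂²). -/

import Mathlib

open Matrix BigOperators

/-- Frobenius norm of a real matrix: `‖A‖_F = sqrt (trace (Aᵀ A))`. -/
noncomputable def frobNorm {m n : ℕ} (A : Matrix (Fin m) (Fin n) ℝ) : ℝ :=
  Real.sqrt ((Aᵀ * A).trace)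

/-- Spectral norm (largest singular value) of a real matrix: the operator 2-norm. -/
noncomputable def specNorm {m n : ℕ} (A : Matrix (Fin m) (Fin n) ℝ) : ℝ :=
  ‖LinearMap.toContinuousLinearMap (Matrix.toEuclideanLin A)‖

noncomputable def toEuc {m n : ℕ} (M : Matrix (Fin m) (Fin n) ℝ) :
    EuclideanSpace ℝ (Fin m × Fin n) := WithLp.toLp 2 (fun p : Fin m × Fin n => M p.1 p.2)

lemma trace_eq {m n : ℕ} (M : Matrix (Fin m) (Fin n) ℝ) :
    (Mᵀ * M).trace = ∑ p : Fin m × Fin n, (M p.1 p.2) ^ 2 := by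
  rw [Fintype.sum_prod_type]
  simp [Matrix.trace, Matrix.mul_apply, Matrix.diag, sq]
  exact Finset.sum_comm

lemma trace_nonneg' {m n : ℕ} (M : Matrix (Fin m) (Fin n) ℝ) :
    0 ≤ (Mᵀ * M).trace := by
  rw [trace_eq]; positivity

lemma frob_eq_norm {m n : ℕ} (M : Matrix (Fin m) (Fin n) ℝ) :
    frobNorm M = ‖toEuc M‖ := by
  rw [frobNorm, trace_eq, EuclideanSpace.norm_eq]
  congr 1
  apply Finset.sum_congr rfl
  intro p _
  rw [Real.norm_eq_abs, sq_abs]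
  rfl

lemma toEuc_sub_smul {m n : ℕ} (A B : Matrix (Fin m) (Fin n) ℝ) (η : ℝ) :
    toEuc (A - η • B) = toEuc A - η • toEuc B := rfl

lemma frob_sq {m n : ℕ} (M : Matrix (Fin m) (Fin n) ℝ) :
    frobNorm M ^ 2 = (Mᵀ * M).trace :=
  Real.sq_sqrt (trace_nonneg' M)

lemma frob_nonneg {m n : ℕ} (M : Matrix (Fin m) (Fin n) ℝ) : 0 ≤ frobNorm M :=
  Real.sqrt_nonneg _

lemma frob_pos {m n : ℕ} {M : Matrix (Fin m) (Fin n) ℝ} (hM : M ≠ 0) :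
    0 < frobNorm M := by
  rw [frob_eq_norm, norm_pos_iff]
  intro h
  apply hM
  ext i j
  have := congrArg (fun v : EuclideanSpace ℝ (Fin m × Fin n) => v (i, j)) h
  simpa [toEuc] using this

lemma specNorm_pos {m n : ℕ} {M : Matrix (Fin m) (Fin n) ℝ} (hM : M ≠ 0) :
    0 < specNorm M := by
  rw [specNorm, norm_pos_iff]
  intro h
  apply hM
  have h1 : Matrix.toEuclideanLin M = 0 := (LinearEquiv.map_eq_zero_iff _).mp h
  exact (LinearEquiv.map_eq_zero_iff _).mp h1

lemma specNorm_sub_le {m n : ℕ} (A B : Matrix (Fin m) (Fin n) ℝ) :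
    specNorm (A - B) ≤ specNorm A + specNorm B := by
  rw [specNorm, specNorm, specNorm, map_sub, map_sub]
  exact norm_sub_le _ _

lemma specNorm_smul {m n : ℕ} (η : ℝ) (B : Matrix (Fin m) (Fin n) ℝ) :
    specNorm (η • B) = |η| * specNorm B := by
  rw [specNorm, specNorm, _root_.map_smul, _root_.map_smul]
  rw [show |η| = ‖η‖ from (Real.norm_eq_abs η).symm]
  exact norm_smul η (LinearMap.toContinuousLinearMap (Matrix.toEuclideanLin B))

lemma frob_lower {m n : ℕ} (A B : Matrix (Fin m) (Fin n) ℝ) (η : ℝ) (hη : 0 ≤ η) :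
    η * frobNorm B - frobNorm A ≤ frobNorm (A - η • B) := by
  rw [frob_eq_norm, frob_eq_norm, frob_eq_norm, toEuc_sub_smul]
  calc η * ‖toEuc B‖ - ‖toEuc A‖ = ‖η • toEuc B‖ - ‖toEuc A‖ := by
        rw [norm_smul, Real.norm_eq_abs, abs_of_nonneg hη]
    _ ≤ ‖η • toEuc B - toEuc A‖ := norm_sub_norm_le _ _
    _ = ‖toEuc A - η • toEuc B‖ := norm_sub_rev _ _

/-- Increasing-knowledge-gain step-size theorem (p = 2): if
`trace(BᵀB)‖A‖₂² > ‖B‖₂² trace(AᵀA)`, then there is `η₀ ≥ 0` such that for all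
`η ≥ η₀`, `C = A − ηB` satisfies `G(C) ≥ G(A)` with `G(M) = trace(MᵀM)/(N‖M‖₂²)`. -/
theorem exists_step_size_increasing_knowledge_gain (m N : ℕ)
    (A B : Matrix (Fin m) (Fin N) ℝ) (hA : A ≠ 0) (hB : B ≠ 0)
    (h : (Bᵀ * B).trace * specNorm A ^ 2 > specNorm B ^ 2 * (Aᵀ * A).trace) :
    ∃ η₀ : ℝ, 0 ≤ η₀ ∧ ∀ η : ℝ, η₀ ≤ η →
      ((A - η • B)ᵀ * (A - η • B)).trace / (N * specNorm (A - η • B) ^ 2) ≥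
        (Aᵀ * A).trace / (N * specNorm A ^ 2) := by
  set aF := frobNorm A with haF
  set bF := frobNorm B with hbF
  set a2 := specNorm A with ha2
  set b2 := specNorm B with hb2
  have haFpos : 0 < aF := frob_pos hA
  have hbFpos : 0 < bF := frob_pos hB
  have ha2pos : 0 < a2 := specNorm_pos hA
  have hb2pos : 0 < b2 := specNorm_pos hB
  have htA : (Aᵀ * A).trace = aF ^ 2 := (frob_sq A).symm
  have htB : (Bᵀ * B).trace = bF ^ 2 := (frob_sq B).symm
  rw [htA, htB] at h
  -- d := bF * a2 - aF * b2 > 0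
  have hd : aF * b2 < bF * a2 := by
    have hsq : (aF * b2) ^ 2 < (bF * a2) ^ 2 := by nlinarith
    exact lt_of_pow_lt_pow_left₀ 2 (by positivity) hsq
  set d := bF * a2 - aF * b2 with hdd
  have hdpos : 0 < d := by simp [hdd]; linarith
  refine ⟨2 * aF * a2 / d, by positivity, ?_⟩
  intro η hη
  have hηd : 2 * aF * a2 ≤ η * d := by
    rw [div_le_iff₀ hdpos] at hη
    linarith
  have hηpos : 0 < η := by nlinarith
  -- key strict positivity: η * bF - aF > 0
  have hkey1 : aF < η * bF := by nlinarith
  -- key cross inequality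
  have hkey2 : aF * (a2 + η * b2) ≤ (η * bF - aF) * a2 := by nlinarith
  set C := A - η • B with hC
  have hCF : η * bF - aF ≤ frobNorm C := frob_lower A B η hηpos.le
  have hCne : C ≠ 0 := by
    intro h0
    have : frobNorm C = 0 := by rw [h0, frobNorm]; simp
    linarith
  have hsC : 0 < specNorm C := specNorm_pos hCne
  have hsCle : specNorm C ≤ a2 + η * b2 := by
    calc specNorm C ≤ specNorm A + specNorm (η • B) := specNorm_sub_le A (η • B)
      _ = a2 + η * b2 := by rw [specNorm_smul, abs_of_nonneg hηpos.le]
  have htC : (Cᵀ * C).trace = frobNorm C ^ 2 := (frob_sq C).symm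
  rcases Nat.eq_zero_or_pos N with hN | hN
  · subst hN; simp
  · have hNpos : (0:ℝ) < N := Nat.cast_pos.mpr hN
    rw [ge_iff_le, htA, htC,
      div_le_div_iff₀ (mul_pos hNpos (pow_pos ha2pos 2)) (mul_pos hNpos (pow_pos hsC 2))]
    have hsub : 0 < η * bF - aF := by linarith
    have main : aF ^ 2 * specNorm C ^ 2 ≤ frobNorm C ^ 2 * a2 ^ 2 := by
      calc aF ^ 2 * specNorm C ^ 2 ≤ aF ^ 2 * (a2 + η * b2) ^ 2 := by
            exact mul_le_mul_of_nonneg_left (pow_le_pow_left₀ hsC.le hsCle 2) (by positivity)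
        _ = (aF * (a2 + η * b2)) ^ 2 := by ring
        _ ≤ ((η * bF - aF) * a2) ^ 2 := pow_le_pow_left₀ (by positivity) hkey2 2
        _ = (η * bF - aF) ^ 2 * a2 ^ 2 := by ring
        _ ≤ frobNorm C ^ 2 * a2 ^ 2 :=
            mul_le_mul_of_nonneg_right (pow_le_pow_left₀ hsub.le hCF 2) (by positivity)
    calc aF ^ 2 * (↑N * specNorm C ^ 2) = ↑N * (aF ^ 2 * specNorm C ^ 2) := by ring
      _ ≤ ↑N * (frobNorm C ^ 2 * a2 ^ 2) := mul_le_mul_of_nonneg_left main hNpos.le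
      _ = frobNorm C ^ 2 * (↑N * a2 ^ 2) := by ring
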